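/- If K_n is the complete graph on n ≥ 2 vertices, then the geodetic hull number of the complementary prism K_n\bar{K}_n satisfies h(K_n\bar{K}_n) = n. -/

import Mathlib

open SimpleGraph

/-- The geodetic closed interval `I[u,v]`: `u`, `v`, and all vertices lying on
some shortest `u`–`v` path. -/
def geoInterval {V : Type*} (G : SimpleGraph V) (u v : V) : Set V :=
  {w | w = u ∨ w = v ∨ (G.Reachable u v ∧ G.dist u w + G.dist w v = G.dist u v)}

/-- A set is geodetically convex if it is closed under intervals. -/
def IsGeoConvex {V : Type*} (G : SimpleGraph V) (S : Set V) : Prop :=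
  ∀ u ∈ S, ∀ v ∈ S, geoInterval G u v ⊆ S

/-- The geodetic convex hull: the smallest convex set containing `S`. -/
def geoHull {V : Type*} (G : SimpleGraph V) (S : Set V) : Set V :=
  ⋂₀ {T | IsGeoConvex G T ∧ S ⊆ T}

/-- `S` is a hull set if its convex hull is the whole vertex set. -/
def IsHullSet {V : Type*} (G : SimpleGraph V) (S : Set V) : Prop :=
  geoHull G S = Set.univ

/-- The geodetic hull number: minimum cardinality of a hull set. -/
noncomputable def hullNumber {V : Type*} (G : SimpleGraph V) : ℕ :=
  sInf {n | ∃ S : Set V, S.ncard = n ∧ IsHullSet G S}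

/-- A vertex is simplicial if its closed neighborhood induces a clique. -/
def IsSimplicial {V : Type*} (G : SimpleGraph V) (v : V) : Prop :=
  ∀ a ∈ G.neighborSet v, ∀ b ∈ G.neighborSet v, a ≠ b → G.Adj a b

/-- The complementary prism `G G̅`: disjoint union of `G` (left copies) and its
complement (right copies), plus a perfect matching between corresponding vertices. -/
def compPrism {V : Type*} (G : SimpleGraph V) : SimpleGraph (V ⊕ V) where
  Adj x y :=
    match x, y with
    | .inl u, .inl w => G.Adj u w
    | .inr u, .inr w => u ≠ w ∧ ¬ G.Adj u w
    | .inl u, .inr w => u = w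
    | .inr u, .inl w => u = w
  symm := by
    constructor
    rintro (u | u) (w | w) h
    · exact h.symm
    · exact h.symm
    · exact h.symm
    · exact ⟨h.1.symm, fun a => h.2 a.symm⟩
  loopless := by
    constructor
    rintro (u | u) h
    · exact G.ne_of_adj h rfl
    · exact h.1 rfl

namespace CPAux

variable {n : ℕ}

local notation "CP" => compPrism (⊤ : SimpleGraph (Fin n))

lemma adj_ll {u v : Fin n} : (CP).Adj (.inl u) (.inl v) ↔ u ≠ v := by
  simp [compPrism]

lemma adj_lr {u v : Fin n} : (CP).Adj (.inl u) (.inr v) ↔ u = v := by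
  simp [compPrism]

lemma adj_rl {u v : Fin n} : (CP).Adj (.inr u) (.inl v) ↔ u = v := by
  simp [compPrism]

lemma not_adj_rr {u v : Fin n} : ¬ (CP).Adj (.inr u) (.inr v) :=
  fun h => h.2 h.1

lemma reach_ll (u v : Fin n) : (CP).Reachable (.inl u) (.inl v) := by
  by_cases h : u = v
  · subst h; exact Reachable.refl _
  · exact (adj_ll.mpr h).reachable

lemma reach_all (x y : Fin n ⊕ Fin n) : (CP).Reachable x y := by
  have hl : ∀ u : Fin n, (CP).Reachable (.inr u) (.inl u) :=
    fun u => (adj_rl.mpr rfl).reachable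
  cases x with
  | inl u => cases y with
    | inl v => exact reach_ll u v
    | inr v => exact (reach_ll u v).trans (hl v).symm
  | inr u => cases y with
    | inl v => exact (hl u).trans (reach_ll u v)
    | inr v => exact ((hl u).trans (reach_ll u v)).trans (hl v).symm

/-- Any positive-length walk out of a pendant vertex goes through `inl u` first. -/
lemma walk_from_inr {u : Fin n} {a : Fin n ⊕ Fin n} (p : (CP).Walk (.inr u) a)
    (hp : p.length ≠ 0) : ∃ q : (CP).Walk (.inl u) a, q.length + 1 = p.length := by
  cases p with
  | nil => simp at hp
  | @cons _ x _ h q =>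
    cases x with
    | inl w =>
      obtain rfl : w = u := (adj_rl.mp h).symm
      exact ⟨q, by simp⟩
    | inr w => exact absurd h not_adj_rr

lemma dist_rl (u : Fin n) : (CP).dist (.inr u) (.inl u) = 1 :=
  dist_eq_one_iff_adj.mpr (adj_rl.mpr rfl)

lemma dist_lr {u v : Fin n} (h : u ≠ v) : (CP).dist (.inl u) (.inr v) = 2 := by
  have hle : (CP).dist (.inl u) (.inr v) ≤ 2 := by
    simpa using dist_le (Walk.cons (adj_ll.mpr h) (Walk.cons (adj_lr.mpr rfl) Walk.nil))
  have h0 : (CP).dist (.inl u) (.inr v) ≠ 0 := by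
    rw [dist_ne_zero_iff_ne_and_reachable]
    exact ⟨by simp, reach_all _ _⟩
  have h1 : (CP).dist (.inl u) (.inr v) ≠ 1 := by
    simp only [ne_eq, dist_eq_one_iff_adj, adj_lr]
    exact h
  omega

lemma dist_rr {u v : Fin n} (h : u ≠ v) : (CP).dist (.inr u) (.inr v) = 3 := by
  have hle : (CP).dist (.inr u) (.inr v) ≤ 3 := by
    simpa using dist_le (Walk.cons (adj_rl.mpr rfl)
      (Walk.cons (adj_ll.mpr h) (Walk.cons (adj_lr.mpr rfl) Walk.nil)))
  have h0 : (CP).dist (.inr u) (.inr v) ≠ 0 := by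
    rw [dist_ne_zero_iff_ne_and_reachable]
    refine ⟨fun hc => h ?_, reach_all _ _⟩
    exact Sum.inr_injective hc
  have h1 : (CP).dist (.inr u) (.inr v) ≠ 1 := by
    simp only [ne_eq, dist_eq_one_iff_adj]
    exact not_adj_rr
  have h2 : (CP).dist (.inr u) (.inr v) ≠ 2 := by
    intro hd
    obtain ⟨p, hp⟩ := exists_walk_of_dist_ne_zero
      (G := CP) (u := (Sum.inr u : Fin n ⊕ Fin n)) (v := (Sum.inr v : Fin n ⊕ Fin n)) h0
    rw [hd] at hp
    obtain ⟨q, hq⟩ := walk_from_inr p (by omega)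
    have : (CP).Adj (.inl u) (.inr v) := Walk.adj_of_length_eq_one (p := q) (by omega)
    exact h (adj_lr.mp this)
  omega

lemma inl_mem_interval {u v : Fin n} (h : u ≠ v) :
    (Sum.inl u : Fin n ⊕ Fin n) ∈ geoInterval CP (.inr u) (.inr v) := by
  refine Or.inr (Or.inr ⟨reach_all _ _, ?_⟩)
  rw [dist_rl, dist_lr h, dist_rr h]

lemma geoHull_convex {V : Type*} (G : SimpleGraph V) (S : Set V) :
    IsGeoConvex G (geoHull G S) := by
  intro u hu v hv w hw T hT
  exact hT.1 u (hu T hT) v (hv T hT) hw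

lemma subset_geoHull {V : Type*} (G : SimpleGraph V) (S : Set V) :
    S ⊆ geoHull G S := fun x hx T hT => hT.2 hx

/-- The set of right vertices is a hull set. -/
lemma range_inr_isHullSet (hn : 2 ≤ n) :
    IsHullSet CP (Set.range (Sum.inr : Fin n → Fin n ⊕ Fin n)) := by
  apply Set.eq_univ_of_forall
  intro x
  cases x with
  | inr u => exact subset_geoHull CP _ (Set.mem_range_self u)
  | inl u =>
    haveI : Nontrivial (Fin n) := Fin.nontrivial_iff_two_le.mpr hn
    obtain ⟨v, hv⟩ := exists_ne u
    exact geoHull_convex CP _ _ (subset_geoHull CP _ (Set.mem_range_self u)) _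
      (subset_geoHull CP _ (Set.mem_range_self v)) (inl_mem_interval hv.symm)

/-- Complement of a pendant vertex is convex. -/
lemma convex_compl_inr (u : Fin n) :
    IsGeoConvex CP ({(Sum.inr u : Fin n ⊕ Fin n)}ᶜ) := by
  intro a ha b hb w hw
  simp only [Set.mem_compl_iff, Set.mem_singleton_iff] at ha hb ⊢
  rintro rfl
  rcases hw with rfl | rfl | ⟨hr, hd⟩
  · exact ha rfl
  · exact hb rfl
  · have ha' : (CP).dist (.inr u) a ≠ 0 := by
      rw [dist_ne_zero_iff_ne_and_reachable]
      exact ⟨fun hc => ha hc.symm, reach_all _ _⟩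
    have hb' : (CP).dist (.inr u) b ≠ 0 := by
      rw [dist_ne_zero_iff_ne_and_reachable]
      exact ⟨fun hc => hb hc.symm, reach_all _ _⟩
    obtain ⟨p, hp⟩ := exists_walk_of_dist_ne_zero
      (G := CP) (u := (Sum.inr u : Fin n ⊕ Fin n)) (v := a) ha'
    obtain ⟨q, hq⟩ := exists_walk_of_dist_ne_zero
      (G := CP) (u := (Sum.inr u : Fin n ⊕ Fin n)) (v := b) hb'
    obtain ⟨p', hp'⟩ := walk_from_inr p (by omega)
    obtain ⟨q', hq'⟩ := walk_from_inr q (by omega)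
    have hshort : (CP).dist a b ≤ p'.length + q'.length := by
      simpa using dist_le (p'.reverse.append q')
    rw [SimpleGraph.dist_comm (u := a)] at hd
    omega

end CPAux

theorem hullNumber_compPrism_complete (n : ℕ) (hn : 2 ≤ n) :
    hullNumber (compPrism (⊤ : SimpleGraph (Fin n))) = n := by
  unfold hullNumber
  have hcard : (Set.range (Sum.inr : Fin n → Fin n ⊕ Fin n)).ncard = n := by
    rw [← Set.image_univ, Set.ncard_image_of_injective _ Sum.inr_injective,
      Set.ncard_univ, Nat.card_eq_fintype_card, Fintype.card_fin]
  apply le_antisymm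
  · refine Nat.sInf_le ?_
    exact ⟨_, hcard, CPAux.range_inr_isHullSet hn⟩
  · refine le_csInf ⟨n, ?_⟩ ?_
    · exact ⟨_, hcard, CPAux.range_inr_isHullSet hn⟩
    rintro m ⟨S, rfl, hS⟩
    have hsub : Set.range (Sum.inr : Fin n → Fin n ⊕ Fin n) ⊆ S := by
      rintro _ ⟨u, rfl⟩
      by_contra hu
      have hSsub : S ⊆ ({(Sum.inr u : Fin n ⊕ Fin n)}ᶜ) := by
        intro x hx
        simp only [Set.mem_compl_iff, Set.mem_singleton_iff]
        rintro rfl; exact hu hx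
      have : geoHull (compPrism (⊤ : SimpleGraph (Fin n))) S ⊆
          ({(Sum.inr u : Fin n ⊕ Fin n)}ᶜ) :=
        Set.sInter_subset_of_mem ⟨CPAux.convex_compl_inr u, hSsub⟩
      rw [hS] at this
      exact (this (Set.mem_univ _)) rfl
    calc n = (Set.range (Sum.inr : Fin n → Fin n ⊕ Fin n)).ncard := hcard.symm
      _ ≤ S.ncard := Set.ncard_le_ncard hsub S.toFinite
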